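/- Let r ≥ 3 be an integer and G a nonempty finite simple r-regular graph. Then 3·c₃(G) + 4·c₄(G) ≤ (r−1)·C(r,2)·|V(G)|; equivalently, 3·d₃(G) + 4·d₄(G) ≤ r(r−1)²/2. In particular the point (d₃(G), d₄(G)) lies on or below the segment joining (0, r(r−1)²/8) and (r(r−1)/6, r(r−1)(r−2)/8). -/

import Mathlib

open SimpleGraph

/-- The number of `k`-cycle subgraphs of `G`: each `k`-cycle subgraph corresponds to exactly
`2 * k` rooted closed walks that are cycles of length `k`. -/
noncomputable def cycleCount {V : Type*} (G : SimpleGraph V) (k : ℕ) : ℕ :=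
  Nat.card ((x : V) × {p : G.Walk x x // p.IsCycle ∧ p.length = k}) / (2 * k)

/-- The density of `k`-cycles: the number of `k`-cycles divided by the number of vertices. -/
noncomputable def cycleDensity {V : Type*} (G : SimpleGraph V) (k : ℕ) : ℝ :=
  (cycleCount G k : ℝ) / (Nat.card V : ℝ)

/-- A graph is `r`-regular if every vertex has exactly `r` neighbors. -/
def IsRegularGraph {V : Type*} (G : SimpleGraph V) (r : ℕ) : Prop :=
  ∀ v : V, Nat.card (G.neighborSet v) = r

section Aux

variable {V : Type*} {G : SimpleGraph V}

/-- Two walks with the same endpoints, lengths and vertex sequences are equal. -/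
private lemma walk_eq_of_getVert {x y : V} (p : G.Walk x y) :
    ∀ q : G.Walk x y, p.length = q.length → (∀ i, p.getVert i = q.getVert i) → p = q := by
  induction p with
  | nil =>
    intro q hl _
    cases q with
    | nil => rfl
    | cons h q => simp at hl
  | cons h p ih =>
    intro q hl hv
    cases q with
    | nil => simp at hl
    | cons h' q' =>
      have h1 := hv 1
      simp only [Walk.getVert_cons_succ, Walk.getVert_zero] at h1
      subst h1
      have hq := ih q' (by simpa using hl)
        (fun i => by simpa only [Walk.getVert_cons_succ] using hv (i + 1))
      subst hq
      rfl

private lemma cycle3_facts {x : V} (p : G.Walk x x) (hp : p.IsCycle) (hl : p.length = 3) :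
    G.Adj x (p.getVert 1) ∧ G.Adj (p.getVert 1) (p.getVert 2) ∧ G.Adj (p.getVert 2) x ∧
    p.getVert 1 ≠ p.getVert 2 ∧ p.getVert 1 ≠ x ∧ p.getVert 2 ≠ x := by
  cases p with
  | nil => simp at hl
  | cons h1 p =>
    cases p with
    | nil => simp at hl
    | cons h2 p =>
      cases p with
      | nil => simp at hl
      | cons h3 p =>
        cases p with
        | cons h4 p => simp only [Walk.length_cons] at hl; omega
        | nil =>
          have hn := hp.support_nodup
          simp only [Walk.support_cons, Walk.support_nil, List.tail_cons, List.nodup_cons,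
            List.mem_cons, List.mem_singleton, List.not_mem_nil, or_false, List.nodup_nil,
            and_true, not_or] at hn
          simp only [Walk.getVert_cons_succ, Walk.getVert_zero]
          refine ⟨h1, h2, h3, ?_, ?_, ?_⟩ <;> tauto

private lemma cycle4_facts {x : V} (p : G.Walk x x) (hp : p.IsCycle) (hl : p.length = 4) :
    G.Adj x (p.getVert 1) ∧ G.Adj (p.getVert 1) (p.getVert 2) ∧
    G.Adj (p.getVert 2) (p.getVert 3) ∧ G.Adj (p.getVert 3) x ∧
    p.getVert 1 ≠ p.getVert 2 ∧ p.getVert 1 ≠ p.getVert 3 ∧ p.getVert 2 ≠ p.getVert 3 ∧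
    p.getVert 1 ≠ x ∧ p.getVert 2 ≠ x ∧ p.getVert 3 ≠ x := by
  cases p with
  | nil => simp at hl
  | cons h1 p =>
    cases p with
    | nil => simp at hl
    | cons h2 p =>
      cases p with
      | nil => simp at hl
      | cons h3 p =>
        cases p with
        | nil => simp at hl
        | cons h4 p =>
          cases p with
          | cons h5 p => simp only [Walk.length_cons] at hl; omega
          | nil =>
            have hn := hp.support_nodup
            simp only [Walk.support_cons, Walk.support_nil, List.tail_cons, List.nodup_cons,
              List.mem_cons, List.mem_singleton, List.not_mem_nil, or_false, List.nodup_nil,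
              and_true, not_or] at hn
            simp only [Walk.getVert_cons_succ, Walk.getVert_zero]
            refine ⟨h1, h2, h3, h4, ?_, ?_, ?_, ?_, ?_, ?_⟩ <;> tauto

end Aux

section Key

open Finset

variable {V : Type*} [Fintype V] [DecidableEq V] (G : SimpleGraph V) [DecidableRel G.Adj]

private lemma key_count (r : ℕ) (hr : 1 ≤ r)
    (hG : ∀ v : V, (G.neighborFinset v).card = r) :
    Nat.card ((x : V) × {p : G.Walk x x // p.IsCycle ∧ p.length = 3}) +
      Nat.card ((x : V) × {p : G.Walk x x // p.IsCycle ∧ p.length = 4}) ≤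
      (r - 1) * (r * (r - 1)) * Fintype.card V := by
  haveI : ∀ (x : V) (k : ℕ), Fintype {p : G.Walk x x // p.IsCycle ∧ p.length = k} := fun x k =>
    Fintype.ofInjective (fun p => (⟨p.1, p.2.2⟩ : {p : G.Walk x x // p.length = k}))
      (fun p q h => by
        simp only [Subtype.mk.injEq] at h
        exact Subtype.ext h)
  set A := (x : V) × {p : G.Walk x x // p.IsCycle ∧ p.length = 3} with hA
  set B := (x : V) × {p : G.Walk x x // p.IsCycle ∧ p.length = 4} with hB
  have hsum : Nat.card A + Nat.card B = (Finset.univ : Finset (A ⊕ B)).card := by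
    rw [Finset.card_univ, ← Nat.card_eq_fintype_card, Nat.card_sum]
  rw [hsum]
  -- the fiber map: root, first vertex, last-but-one vertex
  set f : A ⊕ B → V × V × V := fun s =>
    match s with
    | Sum.inl ⟨x, p⟩ => (p.1.getVert 1, x, p.1.getVert 2)
    | Sum.inr ⟨x, p⟩ => (p.1.getVert 1, x, p.1.getVert 3) with hf
  set P : V × V × V → Prop := fun t => G.Adj t.2.1 t.1 ∧ G.Adj t.2.1 t.2.2 ∧ t.1 ≠ t.2.2 with hP
  have hfib : ∀ t : V × V × V,
      (Finset.univ.filter fun s => f s = t).card ≤ if P t then r - 1 else 0 := by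
    rintro ⟨u, v, w⟩
    by_cases h : P (u, v, w)
    · rw [if_pos h]
      have hv : G.Adj u v := h.1.symm
      have hcard : ((G.neighborFinset u).erase v).card = r - 1 := by
        rw [Finset.card_erase_of_mem (by rwa [mem_neighborFinset]), hG u]
      rw [← hcard]
      apply Finset.card_le_card_of_injOn (fun s =>
        match s with
        | Sum.inl ⟨x, p⟩ => p.1.getVert 2
        | Sum.inr ⟨x, p⟩ => p.1.getVert 2)
      · rintro (⟨x, p, hp, hl⟩ | ⟨x, p, hp, hl⟩) hs
        · simp only [Finset.mem_coe, Finset.mem_filter, Finset.mem_univ, true_and, hf, Prod.mk.injEq] at hs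
          obtain ⟨h1, h2, h3⟩ := hs
          subst h2
          obtain ⟨a1, a2, a3, d1, d2, d3⟩ := cycle3_facts p hp hl
          exact Finset.mem_erase.mpr ⟨d3, by rw [mem_neighborFinset, ← h1]; exact a2⟩
        · simp only [Finset.mem_coe, Finset.mem_filter, Finset.mem_univ, true_and, hf, Prod.mk.injEq] at hs
          obtain ⟨h1, h2, h3⟩ := hs
          subst h2
          obtain ⟨a1, a2, a3, a4, d12, d13, d23, d1, d2, d3⟩ := cycle4_facts p hp hl
          exact Finset.mem_erase.mpr ⟨d2, by rw [mem_neighborFinset, ← h1]; exact a2⟩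
      · rintro (⟨x1, p1, hp1, hl1⟩ | ⟨x1, p1, hp1, hl1⟩) hs1
          (⟨x2, p2, hp2, hl2⟩ | ⟨x2, p2, hp2, hl2⟩) hs2 heq <;>
          simp only [Finset.coe_filter, Set.mem_setOf_eq, Finset.mem_univ, true_and, hf,
            Prod.mk.injEq] at hs1 hs2 <;>
          obtain ⟨e1, e2, e3⟩ := hs1 <;> obtain ⟨g1, g2, g3⟩ := hs2
        · -- both 3-cycles
          subst e2; subst g2
          have : p1 = p2 := by
            apply walk_eq_of_getVert p1 p2 (by omega)
            intro i
            match i with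
            | 0 => simp
            | 1 => rw [e1, g1]
            | 2 => rw [e3, g3]
            | (n + 3) =>
              rw [Walk.getVert_of_length_le p1 (by omega), Walk.getVert_of_length_le p2 (by omega)]
          subst this
          rfl
        · -- 3-cycle vs 4-cycle: impossible
          exfalso
          obtain ⟨a1, a2, a3, a4, d12, d13, d23, d1, d2, d3⟩ := cycle4_facts p2 hp2 hl2
          simp only at heq
          rw [e3] at heq
          exact d23 (heq ▸ g3).symm
        · exfalso
          obtain ⟨a1, a2, a3, a4, d12, d13, d23, d1, d2, d3⟩ := cycle4_facts p1 hp1 hl1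
          simp only at heq
          rw [g3] at heq
          exact d23 (heq.symm ▸ e3).symm
        · -- both 4-cycles
          subst e2; subst g2
          simp only at heq
          have : p1 = p2 := by
            apply walk_eq_of_getVert p1 p2 (by omega)
            intro i
            match i with
            | 0 => simp
            | 1 => rw [e1, g1]
            | 2 => exact heq
            | 3 => rw [e3, g3]
            | (n + 4) =>
              rw [Walk.getVert_of_length_le p1 (by omega), Walk.getVert_of_length_le p2 (by omega)]
          subst this
          rfl
    · rw [if_neg h, Nat.le_zero, Finset.card_eq_zero, Finset.filter_eq_empty_iff]
      rintro (⟨x, p, hp, hl⟩ | ⟨x, p, hp, hl⟩) _ <;>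
        simp only [hf, Prod.mk.injEq, not_and] <;>
        intro h1 h2 h3 <;> subst h2 <;> apply h
      · obtain ⟨a1, a2, a3, d1, d2, d3⟩ := cycle3_facts p hp hl
        exact ⟨h1 ▸ a1, h3 ▸ a3.symm, h1 ▸ h3 ▸ d1⟩
      · obtain ⟨a1, a2, a3, a4, d12, d13, d23, d1, d2, d3⟩ := cycle4_facts p hp hl
        exact ⟨h1 ▸ a1, h3 ▸ a4.symm, h1 ▸ h3 ▸ d13⟩
  have hcherry : (Finset.univ.filter fun t : V × V × V => P t).card ≤
      Fintype.card V * (r * r - r) := by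
    classical
    rw [Finset.card_eq_sum_card_fiberwise
      (f := fun t : V × V × V => t.2.1) (t := Finset.univ) (fun _ _ => Finset.mem_univ _)]
    calc ∑ v : V, ((Finset.univ.filter fun t : V × V × V => P t).filter
          fun t => t.2.1 = v).card
        ≤ ∑ _v : V, (r * r - r) := by
          apply Finset.sum_le_sum
          intro v _
          have hle : ((Finset.univ.filter fun t : V × V × V => P t).filter
              fun t => t.2.1 = v).card ≤ ((G.neighborFinset v).offDiag).card := by
            apply Finset.card_le_card_of_injOn (fun t : V × V × V => (t.1, t.2.2)) ?_ ?_
            · rintro ⟨a, b, c⟩ ht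
              simp only [Finset.mem_coe, Finset.mem_filter, Finset.mem_univ, true_and, hP] at ht
              obtain ⟨⟨q1, q2, q3⟩, rfl⟩ := ht
              exact Finset.mem_offDiag.mpr ⟨(mem_neighborFinset _ _ _).mpr q1,
                (mem_neighborFinset _ _ _).mpr q2, q3⟩
            · rintro ⟨a, b, c⟩ h1 ⟨a', b', c'⟩ h2 hh
              simp only [Finset.coe_filter, Set.mem_setOf_eq] at h1 h2
              simp only [Prod.mk.injEq] at hh
              simp [hh.1, hh.2, h1.2, h2.2]
          rwa [Finset.offDiag_card, hG v] at hle
      _ = Fintype.card V * (r * r - r) := by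
          rw [Finset.sum_const, Finset.card_univ, smul_eq_mul]
  calc (Finset.univ : Finset (A ⊕ B)).card
      = ∑ t : V × V × V, (Finset.univ.filter fun s => f s = t).card :=
        Finset.card_eq_sum_card_fiberwise (fun s _ => Finset.mem_univ _)
    _ ≤ ∑ t : V × V × V, if P t then r - 1 else 0 :=
        Finset.sum_le_sum fun t _ => hfib t
    _ = ∑ t ∈ Finset.univ.filter fun t : V × V × V => P t, (r - 1) :=
        (Finset.sum_filter _ _).symm
    _ = (Finset.univ.filter fun t : V × V × V => P t).card * (r - 1) := by
        rw [Finset.sum_const, smul_eq_mul]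
    _ ≤ (Fintype.card V * (r * r - r)) * (r - 1) :=
        Nat.mul_le_mul_right _ hcherry
    _ = (r - 1) * (r * (r - 1)) * Fintype.card V := by
        obtain ⟨s, rfl⟩ : ∃ s, r = s + 1 := ⟨r - 1, by omega⟩
        simp only [Nat.add_sub_cancel]
        have hs : (s + 1) * (s + 1) - (s + 1) = (s + 1) * s := by
          rw [Nat.mul_succ]; omega
        rw [hs]; ring

end Key

/-- For a nonempty finite simple `r`-regular graph `G` (`r ≥ 3`):
`3·c₃(G) + 4·c₄(G) ≤ (r-1)·C(r,2)·|V(G)|`, equivalently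
`3·d₃(G) + 4·d₄(G) ≤ r(r-1)²/2`, i.e. the point `(d₃(G), d₄(G))` lies on or below the
segment joining `(0, r(r-1)²/8)` and `(r(r-1)/6, r(r-1)(r-2)/8)`. -/
theorem three_c3_add_four_c4_le {V : Type*} [Finite V] [Nonempty V]
    (r : ℕ) (hr : 3 ≤ r) (G : SimpleGraph V) (hG : IsRegularGraph G r) :
    3 * cycleCount G 3 + 4 * cycleCount G 4 ≤ (r - 1) * r.choose 2 * Nat.card V ∧
    3 * cycleDensity G 3 + 4 * cycleDensity G 4 ≤ (r : ℝ) * ((r : ℝ) - 1) ^ 2 / 2 := by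
  classical
  haveI : Fintype V := Fintype.ofFinite V
  have hG' : ∀ v : V, (G.neighborFinset v).card = r := by
    intro v
    rw [← hG v, neighborFinset_def, Set.toFinset_card, Nat.card_eq_fintype_card]
  set a := Nat.card ((x : V) × {p : G.Walk x x // p.IsCycle ∧ p.length = 3}) with ha
  set b := Nat.card ((x : V) × {p : G.Walk x x // p.IsCycle ∧ p.length = 4}) with hb
  have hkey : a + b ≤ (r - 1) * (r * (r - 1)) * Nat.card V := by
    rw [Nat.card_eq_fintype_card]
    exact key_count G r (by omega) hG'
  have hc3 : cycleCount G 3 = a / 6 := by rw [cycleCount, ha]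
  have hc4 : cycleCount G 4 = b / 8 := by rw [cycleCount, hb]
  -- divisibility of r * (r - 1) by 2
  obtain ⟨m, hm⟩ : ∃ m, r * (r - 1) = 2 * m := by
    obtain ⟨m, hm⟩ := Nat.even_mul_pred_self r
    exact ⟨m, by omega⟩
  have hchoose : r.choose 2 = m := by
    rw [Nat.choose_two_right, hm, Nat.mul_div_cancel_left _ (by norm_num)]
  have hnat : 3 * cycleCount G 3 + 4 * cycleCount G 4 ≤ (r - 1) * r.choose 2 * Nat.card V := by
    rw [hc3, hc4, hchoose]
    have h3 : 3 * (a / 6) ≤ a / 2 := by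
      rw [Nat.le_div_iff_mul_le (by norm_num)]
      calc 3 * (a / 6) * 2 = a / 6 * 6 := by ring
        _ ≤ a := Nat.div_mul_le_self a 6
    have h4 : 4 * (b / 8) ≤ b / 2 := by
      rw [Nat.le_div_iff_mul_le (by norm_num)]
      calc 4 * (b / 8) * 2 = b / 8 * 8 := by ring
        _ ≤ b := Nat.div_mul_le_self b 8
    have h5 : a / 2 + b / 2 ≤ (a + b) / 2 := by
      rw [Nat.le_div_iff_mul_le (by norm_num), Nat.add_mul]
      exact Nat.add_le_add (Nat.div_mul_le_self a 2) (Nat.div_mul_le_self b 2)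
    calc 3 * (a / 6) + 4 * (b / 8) ≤ a / 2 + b / 2 := Nat.add_le_add h3 h4
      _ ≤ (a + b) / 2 := h5
      _ ≤ ((r - 1) * (r * (r - 1)) * Nat.card V) / 2 := Nat.div_le_div_right hkey
      _ = (r - 1) * m * Nat.card V := by
          rw [hm]
          rw [show (r - 1) * (2 * m) * Nat.card V = 2 * ((r - 1) * m * Nat.card V) by ring]
          exact Nat.mul_div_cancel_left _ (by norm_num)
  refine ⟨hnat, ?_⟩
  have hN : (0 : ℝ) < (Nat.card V : ℝ) := by exact_mod_cast Nat.card_pos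
  have h1 : 3 * cycleDensity G 3 + 4 * cycleDensity G 4
      = ((3 * cycleCount G 3 + 4 * cycleCount G 4 : ℕ) : ℝ) / (Nat.card V : ℝ) := by
    simp only [cycleDensity]
    push_cast
    ring
  rw [h1, div_le_iff₀ hN]
  calc ((3 * cycleCount G 3 + 4 * cycleCount G 4 : ℕ) : ℝ)
      ≤ (((r - 1) * r.choose 2 * Nat.card V : ℕ) : ℝ) := by exact_mod_cast hnat
    _ = (r : ℝ) * ((r : ℝ) - 1) ^ 2 / 2 * (Nat.card V : ℝ) := by
        push_cast [Nat.cast_choose_two, Nat.cast_sub (show 1 ≤ r by omega)]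
        ring
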